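/- For all n ≥ 1, ∑_{k=0}^{⌊n/2⌋} (1/(n-k))·∑_{d | gcd(n,k)} φ(d)·C((n-k)/d, k/d) = (1/n)·∑_{d|n} φ(d)·L_{n/d}, where φ is Euler's totient, C the binomial coefficient, and L the Lucas numbers (with the k=0 term interpreted as 1). -/

import Mathlib

open Finset

def lucas : ℕ → ℕ
  | 0 => 2
  | 1 => 1
  | n + 2 => lucas (n + 1) + lucas n

theorem lucas_eq : ∀ m, lucas (m+1) = Nat.fib (m+2) + Nat.fib m := by
  intro m
  induction m using Nat.twoStepInduction with
  | zero => simp [lucas]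
  | one => simp [lucas, Nat.fib]
  | more k ih1 ih2 =>
    show lucas (k+2) + lucas (k+1) = _
    rw [ih1, ih2, Nat.fib_add_two (n := k+2), Nat.fib_add_two (n := k)]
    ring

theorem fib_diag (n : ℕ) : ∑ i ∈ Finset.range (n+1), Nat.choose (n - i) i = Nat.fib (n+1) := by
  rw [Nat.fib_succ_eq_sum_choose, Finset.Nat.sum_antidiagonal_eq_sum_range_succ (f := fun a b => Nat.choose a b), ← Finset.sum_range_reflect]
  apply Finset.sum_congr rfl
  intro i hi
  simp only [Finset.mem_range] at hi
  congr 1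
  omega

theorem rowA (m : ℕ) (hm : 1 ≤ m) :
    ∑ j ∈ Finset.range (m / 2 + 1), (1 / ((m : ℚ) - j)) * (Nat.choose (m - j) j : ℚ)
      = (1 / (m : ℚ)) * (lucas m : ℚ) := by
  rcases Nat.lt_or_ge m 2 with h2 | h2
  · interval_cases m
    · norm_num [lucas]
  -- m ≥ 2
  have hstep : ∀ j ∈ Finset.range (m / 2 + 1),
      (1 / ((m : ℚ) - j)) * (Nat.choose (m - j) j : ℚ)
        = (1 / (m : ℚ)) * ((Nat.choose (m - j) j : ℚ)
            + (if j = 0 then 0 else (Nat.choose (m - j - 1) (j - 1) : ℚ))) := by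
    intro j hj
    simp only [Finset.mem_range] at hj
    have hjm : 1 ≤ m - j := by omega
    have hm0 : (m : ℚ) ≠ 0 := by positivity
    rcases eq_or_ne j 0 with rfl | hj0
    · norm_num
    · rw [if_neg hj0]
      have key : (m - j) * Nat.choose (m - j - 1) (j - 1) = Nat.choose (m - j) j * j := by
        have h := Nat.add_one_mul_choose_eq (m - j - 1) (j - 1)
        rw [show m - j - 1 + 1 = m - j by omega, show j - 1 + 1 = j by omega] at h
        exact h
      have hnat : m * Nat.choose (m - j) j
          = (m - j) * (Nat.choose (m - j) j + Nat.choose (m - j - 1) (j - 1)) := by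
        have hmsplit : m = (m - j) + j := by omega
        calc m * Nat.choose (m - j) j = (m - j) * Nat.choose (m - j) j + j * Nat.choose (m - j) j := by
              rw [← Nat.add_mul, ← hmsplit]
          _ = (m - j) * (Nat.choose (m - j) j + Nat.choose (m - j - 1) (j - 1)) := by
              rw [Nat.mul_add, key]
              ring
      have hq := congrArg (fun x : ℕ => (x : ℚ)) hnat
      push_cast [Nat.cast_sub (show j ≤ m by omega)] at hq
      have hmj : ((m : ℚ) - j) ≠ 0 := by
        have : (j : ℚ) < m := by exact_mod_cast (by omega : j < m)
        linarith
      field_simp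
      linear_combination hq
  rw [Finset.sum_congr rfl hstep, ← Finset.mul_sum, Finset.sum_add_distrib]
  have hS1 : ∑ j ∈ Finset.range (m / 2 + 1), (Nat.choose (m - j) j : ℚ) = (Nat.fib (m+1) : ℚ) := by
    have h : ∑ j ∈ Finset.range (m / 2 + 1), Nat.choose (m - j) j = Nat.fib (m+1) := by
      rw [← fib_diag m]
      refine Finset.sum_subset (Finset.range_subset_range.mpr (by omega)) ?_
      intro x hx hx2
      simp only [Finset.mem_range] at hx hx2
      exact Nat.choose_eq_zero_of_lt (by omega)
    exact_mod_cast congrArg (fun x : ℕ => (x : ℚ)) h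
  have hS2 : ∑ j ∈ Finset.range (m / 2 + 1),
      (if j = 0 then (0:ℚ) else (Nat.choose (m - j - 1) (j - 1) : ℚ)) = (Nat.fib (m-1) : ℚ) := by
    have h : ∑ j ∈ Finset.range (m / 2 + 1),
        (if j = 0 then 0 else Nat.choose (m - j - 1) (j - 1)) = Nat.fib (m-1) := by
      rw [Finset.sum_range_succ']
      norm_num
      have h3 : ∑ i ∈ Finset.range (m / 2), Nat.choose (m - (i+1) - 1) i
          = ∑ i ∈ Finset.range (m - 1), Nat.choose ((m - 2) - i) i := by
        rw [Finset.sum_subset (Finset.range_subset_range.mpr (show m / 2 ≤ m - 1 by omega))]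
        · apply Finset.sum_congr rfl
          intro i hi
          congr 1
          omega
        · intro x hx hx2
          simp only [Finset.mem_range] at hx hx2
          exact Nat.choose_eq_zero_of_lt (by omega)
      rw [h3, show m - 1 = (m - 2) + 1 by omega, fib_diag, show m - 2 + 1 = m - 1 by omega]
    calc ∑ j ∈ Finset.range (m / 2 + 1),
        (if j = 0 then (0:ℚ) else (Nat.choose (m - j - 1) (j - 1) : ℚ))
        = ((∑ j ∈ Finset.range (m / 2 + 1),
            (if j = 0 then 0 else Nat.choose (m - j - 1) (j - 1)) : ℕ) : ℚ) := by
          push_cast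
          apply Finset.sum_congr rfl
          intro j _
          split_ifs <;> simp
      _ = (Nat.fib (m-1) : ℚ) := by rw [h]
  rw [hS1, hS2]
  have hl : lucas m = Nat.fib (m+1) + Nat.fib (m-1) := by
    have := lucas_eq (m-1)
    rw [show m - 1 + 1 = m by omega, show m - 1 + 2 = m + 1 by omega] at this
    exact this
  rw [hl]
  push_cast
  ring


theorem sum_dvd_reindex (d N : ℕ) (hd : 0 < d) (f : ℕ → ℚ) :
    ∑ k ∈ (Finset.range (N+1)).filter (d ∣ ·), f k = ∑ j ∈ Finset.range (N/d+1), f (d*j) := by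
  apply Finset.sum_bij' (fun k _ => k / d) (fun j _ => d * j)
  · intro k hk
    simp only [Finset.mem_filter, Finset.mem_range] at hk ⊢
    exact Nat.lt_succ_of_le (Nat.div_le_div_right (Nat.lt_succ_iff.mp hk.1))
  · intro j hj
    simp only [Finset.mem_filter, Finset.mem_range] at hj ⊢
    have h1 : d * j ≤ d * (N/d) := Nat.mul_le_mul_left d (Nat.lt_succ_iff.mp hj)
    have h2 : d * (N/d) ≤ N := by rw [Nat.mul_comm]; exact Nat.div_mul_le_self N d
    exact ⟨by omega, Dvd.intro j rfl⟩
  · intro k hk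
    simp only [Finset.mem_filter] at hk
    exact Nat.mul_div_cancel' hk.2
  · intro j hj
    exact Nat.mul_div_cancel_left j hd
  · intro k hk
    simp only [Finset.mem_filter] at hk
    rw [Nat.mul_div_cancel' hk.2]

theorem W_row_sum (n : ℕ) (hn : 1 ≤ n) :
    ∑ k ∈ Finset.range (n / 2 + 1),
        (1 / ((n : ℚ) - k)) *
          ∑ d ∈ (Nat.gcd n k).divisors,
            (Nat.totient d : ℚ) * (Nat.choose ((n - k) / d) (k / d) : ℚ) =
      (1 / (n : ℚ)) * ∑ d ∈ n.divisors, (Nat.totient d : ℚ) * (lucas (n / d) : ℚ) := by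
  have hn0 : n ≠ 0 := by omega
  -- replace gcd divisors by filtered divisors of n
  have hgcd : ∀ k, (Nat.gcd n k).divisors = n.divisors.filter (· ∣ k) := by
    intro k
    ext d
    simp only [Nat.mem_divisors, Finset.mem_filter, Nat.dvd_gcd_iff]
    constructor
    · rintro ⟨⟨h1, h2⟩, _⟩; exact ⟨⟨h1, hn0⟩, h2⟩
    · rintro ⟨⟨h1, _⟩, h2⟩; exact ⟨⟨h1, h2⟩, Nat.gcd_ne_zero_left hn0⟩
  simp only [hgcd, Finset.mul_sum, Finset.sum_filter, mul_ite, mul_zero]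
  rw [Finset.sum_comm]
  apply Finset.sum_congr rfl
  intro d hd
  obtain ⟨hdn, _⟩ := Nat.mem_divisors.mp hd
  have hd0 : 0 < d := Nat.pos_of_dvd_of_pos hdn (by omega)
  set m := n / d with hm
  have hnm : n = d * m := (Nat.div_mul_cancel hdn).symm.trans (by ring)
  have hm1 : 1 ≤ m := Nat.one_le_div_iff hd0 |>.mpr (Nat.le_of_dvd (by omega) hdn)
  have hrange : n / 2 / d = m / 2 := by
    rw [Nat.div_div_eq_div_mul, hm, Nat.div_div_eq_div_mul, Nat.mul_comm]
  have := sum_dvd_reindex d (n/2) hd0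
    (fun k => (1 / ((n : ℚ) - k)) * ((Nat.totient d : ℚ) * (Nat.choose ((n - k) / d) (k / d) : ℚ)))
  rw [← Finset.sum_filter, this, hrange]
  have hterm : ∀ j ∈ Finset.range (m / 2 + 1),
      (1 / ((n : ℚ) - (d*j : ℕ))) * ((Nat.totient d : ℚ) * (Nat.choose ((n - d*j) / d) ((d*j) / d) : ℚ))
        = (Nat.totient d : ℚ) * ((1/(d:ℚ)) * ((1 / ((m : ℚ) - j)) * (Nat.choose (m - j) j : ℚ))) := by
    intro j hj
    simp only [Finset.mem_range] at hj
    have hjm : j ≤ m := by omega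
    have hmj1 : 1 ≤ m - j := by omega
    have e1 : n - d*j = d * (m - j) := by rw [hnm, Nat.mul_sub]
    have e2 : (n - d*j) / d = m - j := by rw [e1, Nat.mul_div_cancel_left _ hd0]
    have e3 : (d*j) / d = j := Nat.mul_div_cancel_left j hd0
    have e4 : ((n : ℚ) - (d*j : ℕ)) = (d : ℚ) * ((m : ℚ) - j) := by
      rw [hnm]
      push_cast
      ring
    rw [e2, e3, e4]
    have hd0' : (d : ℚ) ≠ 0 := by positivity
    have hmj' : ((m : ℚ) - j) ≠ 0 := by
      have : (j : ℚ) < m := by exact_mod_cast (by omega : j < m)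
      linarith
    have e5 : ((m - j : ℕ) : ℚ) = (m : ℚ) - j := by
      rw [Nat.cast_sub hjm]
    field_simp
  rw [Finset.sum_congr rfl hterm, ← Finset.mul_sum, ← Finset.mul_sum, rowA m hm1]
  have hd0' : (d : ℚ) ≠ 0 := by positivity
  have hm0' : (m : ℚ) ≠ 0 := by positivity
  have hn0' : (n : ℚ) ≠ 0 := by positivity
  have : (n : ℚ) = (d : ℚ) * m := by rw [hnm]; push_cast; ring
  field_simp [this]
  linear_combination ((lucas m : ℕ) : ℚ) * this
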